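/- Let k be a separably closed field of characteristic different from 2, V a finite-dimensional vector space over k, and B a nondegenerate symmetric bilinear form on V. Let X be a nonzero linear endomorphism of V with B(X u, v) = −B(u, X v) for all u, v ∈ V and with X ∘ X = 0. Then there exists a vector v ∈ V such that X v ≠ 0 and B(v, v) = 0; for such v one automatically also has B(v, X v) = 0 and B(X v, X v) = 0, so the span of v and X v is a 2-dimensional totally singular subspace of V invariant under X. -/
import Mathlib

theorem stmt17 {k V : Type*} [Field k] [IsSepClosed k] [AddCommGroup V] [Module k V]
    [FiniteDimensional k V]
    (hchar : (2 : k) ≠ 0)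
    (B : LinearMap.BilinForm k V)
    (hnd : ∀ u : V, u ≠ 0 → ∃ w : V, B u w ≠ 0)
    (hsymm : ∀ u v : V, B u v = B v u)
    (X : Module.End k V) (hX0 : X ≠ 0)
    (hskew : ∀ u v : V, B (X u) v = -B u (X v))
    (hsq : X * X = 0) :
    ∃ v : V, X v ≠ 0 ∧ B v v = 0 ∧ B v (X v) = 0 ∧ B (X v) (X v) = 0 ∧
      Module.finrank k (Submodule.span k ({v, X v} : Set V)) = 2 ∧
      (∀ w ∈ Submodule.span k ({v, X v} : Set V),
        ∀ w' ∈ Submodule.span k ({v, X v} : Set V), B w w' = 0) ∧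
      (∀ w ∈ Submodule.span k ({v, X v} : Set V),
        X w ∈ Submodule.span k ({v, X v} : Set V)) := by
  -- X² = 0 pointwise
  have hXX : ∀ w : V, X (X w) = 0 := by
    intro w
    have := LinearMap.congr_fun hsq w
    simpa [Module.End.mul_apply] using this
  -- B w (X w) = 0 for all w
  have hiso : ∀ w : V, B w (X w) = 0 := by
    intro w
    have h1 := hskew w w
    have h2 := hsymm (X w) w
    have h3 : (2 : k) * B w (X w) = 0 := by linear_combination h1 - h2
    exact (mul_eq_zero.mp h3).resolve_left hchar
  -- B (X a) (X b) = 0 for all a b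
  have hiso2 : ∀ a b : V, B (X a) (X b) = 0 := by
    intro a b
    rw [hskew a (X b), hXX b]
    simp
  -- find u with X u ≠ 0
  obtain ⟨u, hu⟩ : ∃ u : V, X u ≠ 0 := by
    by_contra h
    push_neg at h
    exact hX0 (LinearMap.ext fun w => by simpa using h w)
  obtain ⟨z, hz⟩ := hnd (X u) hu
  set c : k := B (X u) z with hc
  set s : k := B u u / (2 * c) with hs
  set v : V := u + s • X z with hv
  have hXv : X v = X u := by
    simp [hv, hXX z]
  have huXz : B u (X z) = -c := by
    rw [hc, hskew u z, neg_neg]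
  have hXzu : B (X z) u = -c := by rw [hsymm (X z) u, huXz]
  have hvv : B v v = 0 := by
    rw [hv]
    simp only [map_add, map_smul, LinearMap.add_apply, LinearMap.smul_apply,
      smul_eq_mul, huXz, hXzu, hiso2 z z]
    rw [hs]
    field_simp
    ring
  have hXvne : X v ≠ 0 := by rw [hXv]; exact hu
  refine ⟨v, hXvne, hvv, hiso v, hiso2 v v, ?_, ?_, ?_⟩
  · -- finrank = 2
    have hli : LinearIndependent k ![v, X v] := by
      rw [LinearIndependent.pair_iff]
      intro a b hab
      have h1 : a • X v = 0 := by
        have := congrArg X hab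
        simpa [map_add, map_smul, hXX v] using this
      have ha : a = 0 := by
        rcases smul_eq_zero.mp h1 with h | h
        · exact h
        · exact absurd h hXvne
      subst ha
      simp only [zero_smul, zero_add] at hab
      rcases smul_eq_zero.mp hab with h | h
      · exact ⟨rfl, h⟩
      · exact absurd h hXvne
    have := finrank_span_eq_card hli
    rwa [Matrix.range_cons_cons_empty] at this
  · -- totally singular
    intro w hw w' hw'
    obtain ⟨a, b, rfl⟩ := Submodule.mem_span_pair.mp hw
    obtain ⟨a', b', rfl⟩ := Submodule.mem_span_pair.mp hw'
    simp only [map_add, map_smul, LinearMap.add_apply, LinearMap.smul_apply,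
      smul_eq_mul, hvv, hiso v, hiso2 v v, hsymm (X v) v, hiso v]
    ring
  · -- invariant
    intro w hw
    obtain ⟨a, b, rfl⟩ := Submodule.mem_span_pair.mp hw
    have : X (a • v + b • X v) = a • X v := by
      simp [map_add, map_smul, hXX v]
    rw [this]
    exact Submodule.smul_mem _ _ (Submodule.subset_span (by simp))
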